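/- Let Γ be a finite connected graph with circuit rank β₁ = E - V + 1, and let u_1, u_2 be two distinct vertices joined by an edge e_0. Then the number of paths from u_1 to u_2 in Γ that avoid e_0 and are pairwise internally vertex-disjoint is at most β₁. In particular, if P denotes the number of internally-disjoint paths of length two from u_1 to u_2 avoiding e_0 and Q denotes the number of internally-disjoint paths of length three from u_1 to u_2 avoiding e_0 (with the paths counted by P and Q all pairwise internally disjoint), then P + Q ≤ β₁. -/

import Mathlib

open Finset

/-- Let `Γ` be a finite connected graph with circuit rank `β₁ = E - V + 1` and
let `u₁ ≠ u₂` be joined by an edge `e₀ = s(u₁,u₂)`.  Any family of pairwise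
internally vertex-disjoint paths from `u₁` to `u₂` avoiding `e₀` has at most
`β₁` members.  (In particular `P + Q ≤ β₁` for the counts `P`, `Q` of such
paths of lengths two and three.) -/
theorem disjoint_paths_le_circuit_rank {V : Type*} [Fintype V] [DecidableEq V]
    (Γ : SimpleGraph V) [DecidableRel Γ.Adj] (hconn : Γ.Connected)
    (u₁ u₂ : V) (hne : u₁ ≠ u₂) (hadj : Γ.Adj u₁ u₂)
    (n : ℕ) (p : Fin n → Γ.Path u₁ u₂)
    (havoid : ∀ i, s(u₁, u₂) ∉ (p i).1.edges)
    (hdisj : ∀ i j, i ≠ j → ∀ w, w ∈ (p i).1.support → w ∈ (p j).1.support →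
      w = u₁ ∨ w = u₂) :
    (n : ℤ) ≤ (Γ.edgeFinset.card : ℤ) - (Fintype.card V : ℤ) + 1 := by
  classical
  -- closer neighbor
  have hclose : ∀ v : V, v ≠ u₁ → ∃ x, Γ.Adj v x ∧ Γ.dist x u₁ < Γ.dist v u₁ := by
    intro v hv
    have hd : Γ.dist v u₁ ≠ 0 :=
      SimpleGraph.dist_ne_zero_iff_ne_and_reachable.2 ⟨hv, hconn.preconnected v u₁⟩
    obtain ⟨q, hq⟩ := SimpleGraph.exists_walk_of_dist_ne_zero hd
    cases q with
    | nil => exact absurd rfl hv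
    | cons h q' =>
      refine ⟨_, h, ?_⟩
      have := SimpleGraph.dist_le q'
      simp [SimpleGraph.Walk.length_cons] at hq
      omega
  set ℓ : Fin n → ℕ := fun i => (p i).1.length with hℓ
  have hlpos : ∀ i, 1 ≤ ℓ i := by
    intro i
    rcases Nat.eq_zero_or_pos (ℓ i) with h | h
    · exact absurd ((p i).1.eq_of_length_eq_zero h) hne
    · exact h
  set Ei : Fin n → Finset (Sym2 V) := fun i => (p i).1.edges.toFinset with hEi
  set Si : Fin n → Finset V := fun i => (p i).1.support.toFinset with hSi
  set Ii : Fin n → Finset V := fun i => Si i \ {u₁, u₂} with hIi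
  have hcardEi : ∀ i, (Ei i).card = ℓ i := by
    intro i
    rw [hEi]
    rw [List.toFinset_card_of_nodup (p i).2.edges_nodup, SimpleGraph.Walk.length_edges]
  have hu₁Si : ∀ i, u₁ ∈ Si i := fun i => by
    simp [hSi, SimpleGraph.Walk.start_mem_support]
  have hu₂Si : ∀ i, u₂ ∈ Si i := fun i => by
    simp [hSi, SimpleGraph.Walk.end_mem_support]
  have hcardSi : ∀ i, (Si i).card = ℓ i + 1 := by
    intro i
    rw [hSi, List.toFinset_card_of_nodup (p i).2.support_nodup,
      SimpleGraph.Walk.length_support]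
  have hcardIi : ∀ i, (Ii i).card = ℓ i - 1 := by
    intro i
    rw [hIi]
    rw [card_sdiff_of_subset (by intro x hx; simp at hx; rcases hx with rfl | rfl
                                 exacts [hu₁Si i, hu₂Si i])]
    rw [hcardSi, card_pair hne]
    omega
  set S : Finset V := {u₁, u₂} ∪ Finset.univ.biUnion Ii with hS
  set W : Finset V := Finset.univ \ S with hW
  have hsupS : ∀ i, Si i ⊆ S := by
    intro i v hv
    rw [hS]
    by_cases hv12 : v = u₁ ∨ v = u₂
    · rcases hv12 with rfl | rfl <;> simp
    · push_neg at hv12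
      simp only [mem_union, mem_biUnion]
      exact Or.inr ⟨i, mem_univ i, by simp [hIi, hv, hv12]⟩
  have hWne1 : ∀ w ∈ W, w ≠ u₁ := by
    intro w hw
    rw [hW, mem_sdiff, hS] at hw
    intro h; exact hw.2 (by simp [h])
  have hWne2 : ∀ w ∈ W, w ≠ u₂ := by
    intro w hw
    rw [hW, mem_sdiff, hS] at hw
    intro h; exact hw.2 (by simp [h])
  have hWnotS : ∀ w ∈ W, ∀ i, w ∉ Si i := by
    intro w hw i hws
    rw [hW, mem_sdiff] at hw
    exact hw.2 (hsupS i hws)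
  -- the chosen-edge function
  set f : V → Sym2 V := fun v =>
    if h : v = u₁ then s(u₁, u₂) else s(v, Classical.choose (hclose v h)) with hf
  have hfval : ∀ w (h : w ≠ u₁), f w = s(w, Classical.choose (hclose w h)) := by
    intro w h; rw [hf]; simp [h]
  have hfmem : ∀ w (h : w ≠ u₁), w ∈ f w := by
    intro w h; rw [hfval w h]; simp
  have hfadj : ∀ w (h : w ≠ u₁), f w ∈ Γ.edgeSet := by
    intro w h; rw [hfval w h]
    exact (Classical.choose_spec (hclose w h)).1
  -- the big edge set
  set B : Finset (Sym2 V) :=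
    insert s(u₁, u₂) (Finset.univ.biUnion Ei ∪ W.image f) with hB
  have hBsub : B ⊆ Γ.edgeFinset := by
    intro e he
    rw [hB, mem_insert, mem_union] at he
    rw [SimpleGraph.mem_edgeFinset]
    rcases he with rfl | he | he
    · exact hadj
    · rw [mem_biUnion] at he
      obtain ⟨i, _, hei⟩ := he
      rw [hEi] at hei; simp only [List.mem_toFinset] at hei
      exact (p i).1.edges_subset_edgeSet hei
    · rw [mem_image] at he
      obtain ⟨w, hw, rfl⟩ := he
      exact hfadj w (hWne1 w hw)
  -- endpoints of path edges are in support
  have hedge_sup : ∀ i, ∀ e ∈ Ei i, ∀ v ∈ e, v ∈ Si i := by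
    intro i e he v hv
    rw [hEi] at he; simp only [List.mem_toFinset] at he
    rw [hSi]; simp only [List.mem_toFinset]
    induction e with
    | _ a b =>
      rw [Sym2.mem_iff] at hv
      rcases hv with rfl | rfl
      · exact (p i).1.fst_mem_support_of_mem_edges he
      · exact (p i).1.snd_mem_support_of_mem_edges he
  -- pairwise disjointness of path edge sets
  have hEdisj : ∀ i j, i ≠ j → Disjoint (Ei i) (Ei j) := by
    intro i j hij
    rw [Finset.disjoint_left]
    intro e hei hej
    induction e with
    | _ a b =>
      have hab : Γ.Adj a b := by
        have := hBsub (by rw [hB]; simp only [mem_insert, mem_union, mem_biUnion]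
                          exact Or.inr (Or.inl ⟨i, mem_univ i, hei⟩))
        rwa [SimpleGraph.mem_edgeFinset, SimpleGraph.mem_edgeSet] at this
      have ha := hdisj i j hij a
        (by have := hedge_sup i _ hei a (by simp); rwa [hSi, List.mem_toFinset] at this)
        (by have := hedge_sup j _ hej a (by simp); rwa [hSi, List.mem_toFinset] at this)
      have hb := hdisj i j hij b
        (by have := hedge_sup i _ hei b (by simp); rwa [hSi, List.mem_toFinset] at this)
        (by have := hedge_sup j _ hej b (by simp); rwa [hSi, List.mem_toFinset] at this)
      have : s(a, b) = s(u₁, u₂) := by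
        rcases ha with rfl | rfl <;> rcases hb with rfl | rfl
        · exact absurd rfl hab.ne
        · rfl
        · rw [Sym2.eq_swap]
        · exact absurd rfl hab.ne
      rw [this] at hei
      rw [hEi] at hei; simp only [List.mem_toFinset] at hei
      exact havoid i hei
  -- f is injective on W
  have hfinj : Set.InjOn f W := by
    intro w hw w' hw' heq
    have h1 := hWne1 w hw
    have h2 := hWne1 w' hw'
    rw [hfval w h1, hfval w' h2, Sym2.eq_iff] at heq
    rcases heq with ⟨rfl, _⟩ | ⟨h3, h4⟩
    · rfl
    · have c1 := (Classical.choose_spec (hclose w h1)).2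
      have c2 := (Classical.choose_spec (hclose w' h2)).2
      rw [h4] at c1
      rw [← h3] at c2
      omega
  -- image of f on W is disjoint from the rest
  have hfW_not_e0 : s(u₁, u₂) ∉ W.image f := by
    rw [mem_image]
    rintro ⟨w, hw, hwe⟩
    have := hfmem w (hWne1 w hw)
    rw [hwe, Sym2.mem_iff] at this
    rcases this with rfl | rfl
    · exact hWne1 w hw rfl
    · exact hWne2 w hw rfl
  have hfW_not_path : Disjoint (Finset.univ.biUnion Ei) (W.image f) := by
    rw [Finset.disjoint_left]
    intro e he hf'
    rw [mem_biUnion] at he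
    obtain ⟨i, _, hei⟩ := he
    rw [mem_image] at hf'
    obtain ⟨w, hw, rfl⟩ := hf'
    exact hWnotS w hw i (hedge_sup i _ hei w (hfmem w (hWne1 w hw)))
  have he0_not : s(u₁, u₂) ∉ Finset.univ.biUnion Ei ∪ W.image f := by
    rw [mem_union]
    rintro (h | h)
    · rw [mem_biUnion] at h
      obtain ⟨i, _, hei⟩ := h
      rw [hEi] at hei; simp only [List.mem_toFinset] at hei
      exact havoid i hei
    · exact hfW_not_e0 h
  -- cardinality of B
  have hcardB : B.card = 1 + (∑ i, ℓ i) + W.card := by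
    rw [hB, card_insert_of_notMem he0_not,
      card_union_of_disjoint hfW_not_path,
      card_biUnion (fun i _ j _ hij => hEdisj i j hij),
      card_image_of_injOn hfinj]
    simp only [hcardEi]
    ring
  -- cardinality of S
  have hIdisj : ∀ i j, i ≠ j → Disjoint (Ii i) (Ii j) := by
    intro i j hij
    rw [Finset.disjoint_left]
    intro v hvi hvj
    rw [hIi, mem_sdiff] at hvi hvj
    have := hdisj i j hij v (by have := hvi.1; rwa [hSi, List.mem_toFinset] at this)
      (by have := hvj.1; rwa [hSi, List.mem_toFinset] at this)
    exact hvi.2 (by simpa using this)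
  have hpairdisj : Disjoint ({u₁, u₂} : Finset V) (Finset.univ.biUnion Ii) := by
    rw [Finset.disjoint_left]
    intro v hv hv'
    rw [mem_biUnion] at hv'
    obtain ⟨i, _, hvi⟩ := hv'
    rw [hIi, mem_sdiff] at hvi
    exact hvi.2 hv
  have hcardS : S.card = 2 + ∑ i, (ℓ i - 1) := by
    rw [hS, card_union_of_disjoint hpairdisj,
      card_biUnion (fun i _ j _ hij => hIdisj i j hij), card_pair hne]
    simp only [hcardIi]
  have hcardW : W.card + S.card = Fintype.card V := by
    have hle : S.card ≤ Fintype.card V := by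
      simpa using card_le_card (subset_univ S)
    rw [hW, card_sdiff_of_subset (subset_univ S), card_univ]
    omega
  have hEcard : B.card ≤ Γ.edgeFinset.card := card_le_card hBsub
  have hsum : (∑ i, ℓ i) = (∑ i, (ℓ i - 1)) + n := by
    calc (∑ i, ℓ i) = ∑ i, ((ℓ i - 1) + 1) :=
          Finset.sum_congr rfl (fun i _ => by have := hlpos i; omega)
      _ = (∑ i, (ℓ i - 1)) + n := by
          rw [Finset.sum_add_distrib]
          simp
  have hcardS_le : S.card ≤ Fintype.card V := card_le_card (subset_univ S) |>.trans_eq card_univ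
  have key : n + Fintype.card V ≤ Γ.edgeFinset.card + 1 := by
    rw [hcardB, hsum] at hEcard
    rw [hcardS] at hcardW
    omega
  omega
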